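/- For the quasi-conformal coframe: (i) the two-indexed B-object ⁽²⁾B_{ab} = B^m{}_{mab} satisfies ⁽²⁾B_{ij} = −e^{−2f}φ_{ij} for all spatial i,j and ⁽²⁾B_{0a} = ⁽²⁾B_{a0} = 0; and (ii) the two-indexed B-object ⁽³⁾B_{ab} = B^m{}_{abm} vanishes identically: ⁽³⁾B_{ab} = 0 for all a,b. -/

import Mathlib

open scoped BigOperators

noncomputable section

/-- Partial derivative along coordinate `i` on `ℝ³`. -/
def pd (i : Fin 3) (f : (Fin 3 → ℝ) → ℝ) : (Fin 3 → ℝ) → ℝ :=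
  fun x => fderiv ℝ f x (Pi.single i 1)

/-- Partial derivative indexed by a 4-index: zero for the time index `0`. -/
def pd4 (f : (Fin 3 → ℝ) → ℝ) (p : Fin 4) : (Fin 3 → ℝ) → ℝ :=
  if h : p = 0 then 0 else pd (p.pred h) f

/-- Signs of the Minkowski metric `η = diag(1,−1,−1,−1)`. -/
def epsM (a : Fin 4) : ℝ := if a = 0 then 1 else -1

/-- The Minkowski metric `η = diag(1,−1,−1,−1)`. -/
def etaM (a b : Fin 4) : ℝ := if a = b then epsM a else 0

/-- Anholonomity objects `C^a_{mn}` of the quasi-conformal coframe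
`ϑ⁰ = e^{−f}dt`, `ϑⁱ = e^{f}dxⁱ`:  `C⁰_{0i} = e^{−f}fᵢ`, `C^i_{ij} = −e^{−f}fⱼ`
(spatial `i ≠ j`), antisymmetric in the lower pair, all other components zero. -/
def Cob (f : (Fin 3 → ℝ) → ℝ) (a m n : Fin 4) : (Fin 3 → ℝ) → ℝ := fun x =>
  if a = 0 then
    Real.exp (-f x) * ((if m = 0 then pd4 f n x else 0) - (if n = 0 then pd4 f m x else 0))
  else
    Real.exp (-f x) * ((if n = a then pd4 f m x else 0) - (if m = a then pd4 f n x else 0))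

/-- The contraction `C_a := C^m_{am}`. -/
def Cone (f : (Fin 3 → ℝ) → ℝ) (a : Fin 4) : (Fin 3 → ℝ) → ℝ :=
  fun x => ∑ m : Fin 4, Cob f m a m x

/-- The B-objects `B^a_{mn0} := 0`, `B^a_{mnp} := e^{−f} ∂_p C^a_{mn}` for `p = 1,2,3`. -/
def Bob (f : (Fin 3 → ℝ) → ℝ) (a m n p : Fin 4) : (Fin 3 → ℝ) → ℝ :=
  fun x => Real.exp (-f x) * pd4 (Cob f a m n) p x

/-- `⁽¹⁾B_{ab} := B_{abm}{}^m` (indices moved with `η`). -/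
def B1 (f : (Fin 3 → ℝ) → ℝ) (a b : Fin 4) : (Fin 3 → ℝ) → ℝ :=
  fun x => epsM a * ∑ m : Fin 4, epsM m * Bob f a b m m x

/-- `⁽²⁾B_{ab} := B^m{}_{mab}`. -/
def B2 (f : (Fin 3 → ℝ) → ℝ) (a b : Fin 4) : (Fin 3 → ℝ) → ℝ :=
  fun x => ∑ m : Fin 4, Bob f m m a b x

/-- `⁽³⁾B_{ab} := B^m{}_{abm}`. -/
def B3 (f : (Fin 3 → ℝ) → ℝ) (a b : Fin 4) : (Fin 3 → ℝ) → ℝ :=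
  fun x => ∑ m : Fin 4, Bob f m a b m x

/-- The scalar B-object `B := η^{ab}⁽¹⁾B_{ab}`. -/
def Bscalar (f : (Fin 3 → ℝ) → ℝ) : (Fin 3 → ℝ) → ℝ :=
  fun x => ∑ a : Fin 4, epsM a * B1 f a a x

/-- `⁽¹⁾A_{ab} := C_{abm}C^m`. -/
def A1 (f : (Fin 3 → ℝ) → ℝ) (a b : Fin 4) : (Fin 3 → ℝ) → ℝ :=
  fun x => epsM a * ∑ m : Fin 4, epsM m * Cob f a b m x * Cone f m x

/-- `⁽²⁾A_{ab} := C_{mab}C^m`. -/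
def A2 (f : (Fin 3 → ℝ) → ℝ) (a b : Fin 4) : (Fin 3 → ℝ) → ℝ :=
  fun x => ∑ m : Fin 4, Cob f m a b x * Cone f m x

/-- `⁽³⁾A_{ab} := C_{amn}C_b{}^{mn}`. -/
def A3 (f : (Fin 3 → ℝ) → ℝ) (a b : Fin 4) : (Fin 3 → ℝ) → ℝ :=
  fun x => epsM a * epsM b *
    ∑ m : Fin 4, ∑ n : Fin 4, epsM m * epsM n * Cob f a m n x * Cob f b m n x

/-- `⁽⁴⁾A_{ab} := C_{amn}C^m{}_b{}^n`. -/
def A4 (f : (Fin 3 → ℝ) → ℝ) (a b : Fin 4) : (Fin 3 → ℝ) → ℝ :=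
  fun x => epsM a * ∑ m : Fin 4, ∑ n : Fin 4, epsM n * Cob f a m n x * Cob f m b n x

/-- `⁽⁵⁾A_{ab} := C_{man}C^n{}_b{}^m`. -/
def A5 (f : (Fin 3 → ℝ) → ℝ) (a b : Fin 4) : (Fin 3 → ℝ) → ℝ :=
  fun x => ∑ m : Fin 4, ∑ n : Fin 4, Cob f m a n x * Cob f n b m x

/-- `⁽⁶⁾A_{ab} := C_{man}C^m{}_b{}^n`. -/
def A6 (f : (Fin 3 → ℝ) → ℝ) (a b : Fin 4) : (Fin 3 → ℝ) → ℝ :=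
  fun x => ∑ m : Fin 4, ∑ n : Fin 4, epsM m * epsM n * Cob f m a n x * Cob f m b n x

/-- `⁽⁷⁾A_{ab} := C_a C_b`. -/
def A7 (f : (Fin 3 → ℝ) → ℝ) (a b : Fin 4) : (Fin 3 → ℝ) → ℝ :=
  fun x => Cone f a x * Cone f b x

/-- `⁽¹⁾A := η^{ab}⁽¹⁾A_{ab}`. -/
def A1s (f : (Fin 3 → ℝ) → ℝ) : (Fin 3 → ℝ) → ℝ :=
  fun x => ∑ a : Fin 4, epsM a * A1 f a a x

/-- `⁽²⁾A := η^{ab}⁽³⁾A_{ab}`. -/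
def A2s (f : (Fin 3 → ℝ) → ℝ) : (Fin 3 → ℝ) → ℝ :=
  fun x => ∑ a : Fin 4, epsM a * A3 f a a x

/-- `⁽³⁾A := η^{ab}⁽⁴⁾A_{ab}`. -/
def A3s (f : (Fin 3 → ℝ) → ℝ) : (Fin 3 → ℝ) → ℝ :=
  fun x => ∑ a : Fin 4, epsM a * A4 f a a x

/-- `φ_{ij} := f_{ij} − fᵢfⱼ`. -/
def phiM (f : (Fin 3 → ℝ) → ℝ) (i j : Fin 3) : (Fin 3 → ℝ) → ℝ :=
  fun x => pd i (pd j f) x - pd i f x * pd j f x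

/-- `Δ̃φ := φ₁₁ + φ₂₂ + φ₃₃`. -/
def tphi (f : (Fin 3 → ℝ) → ℝ) : (Fin 3 → ℝ) → ℝ :=
  fun x => ∑ i : Fin 3, phiM f i i x

/-- The Laplacian `Δf := f₁₁ + f₂₂ + f₃₃`. -/
def lap (f : (Fin 3 → ℝ) → ℝ) : (Fin 3 → ℝ) → ℝ :=
  fun x => ∑ i : Fin 3, pd i (pd i f) x

/-- `∇²f := f₁² + f₂² + f₃²`. -/
def grad2 (f : (Fin 3 → ℝ) → ℝ) : (Fin 3 → ℝ) → ℝ :=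
  fun x => ∑ i : Fin 3, pd i f x ^ 2

/-- The leading (second order) part
`L_{ab} = β₁⁽¹⁾B_{(ab)} + β₂⁽²⁾B_{(ab)} + β₃⁽³⁾B_{ab} + β₄η_{ab}B + β₅⁽¹⁾B_{[ab]} + β₆⁽²⁾B_{[ab]}`. -/
def Lmat (β₁ β₂ β₃ β₄ β₅ β₆ : ℝ) (f : (Fin 3 → ℝ) → ℝ) (a b : Fin 4) :
    (Fin 3 → ℝ) → ℝ := fun x =>
  β₁ * ((B1 f a b x + B1 f b a x) / 2) + β₂ * ((B2 f a b x + B2 f b a x) / 2) +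
  β₃ * B3 f a b x + β₄ * etaM a b * Bscalar f x +
  β₅ * ((B1 f a b x - B1 f b a x) / 2) + β₆ * ((B2 f a b x - B2 f b a x) / 2)

/-- The quadratic part `Q_{ab}`. -/
def Qmat (α₁ α₂ α₃ α₄ α₅ α₆ α₇ α₈ α₉ α₁₀ α₁₁ α₁₂ : ℝ) (f : (Fin 3 → ℝ) → ℝ)
    (a b : Fin 4) : (Fin 3 → ℝ) → ℝ := fun x =>
  α₁ * ((A1 f a b x + A1 f b a x) / 2) + α₂ * A2 f a b x + α₃ * A3 f a b x +
  α₄ * ((A4 f a b x + A4 f b a x) / 2) + α₅ * A5 f a b x + α₆ * A6 f a b x +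
  α₇ * A7 f a b x + α₈ * ((A1 f a b x - A1 f b a x) / 2) +
  α₉ * ((A4 f a b x - A4 f b a x) / 2) +
  etaM a b * (α₁₀ * A1s f x + α₁₁ * A2s f x + α₁₂ * A3s f x)

/-- `diag(β₁−β₄, β₁+β₄, β₁+β₄, β₁+β₄)`. -/
def diagM (β₁ β₄ : ℝ) (a b : Fin 4) : ℝ :=
  if a = b then (if a = 0 then β₁ - β₄ else β₁ + β₄) else 0

lemma pd4_zero' (g : (Fin 3 → ℝ) → ℝ) : pd4 g 0 = 0 := rfl
lemma pd4_one (g : (Fin 3 → ℝ) → ℝ) : pd4 g 1 = pd 0 g := rfl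
lemma pd4_two (g : (Fin 3 → ℝ) → ℝ) : pd4 g 2 = pd 1 g := rfl
lemma pd4_three (g : (Fin 3 → ℝ) → ℝ) : pd4 g 3 = pd 2 g := rfl
lemma pd4_succ (g : (Fin 3 → ℝ) → ℝ) (k : Fin 3) : pd4 g k.succ = pd k g := by
  simp [pd4, Fin.succ_ne_zero]

lemma pd_zero (j : Fin 3) (x : Fin 3 → ℝ) : pd j (fun _ => (0:ℝ)) x = 0 := by
  simp [pd]

lemma pd_neg (g : (Fin 3 → ℝ) → ℝ) (j : Fin 3) (x : Fin 3 → ℝ) :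
    pd j (fun y => -(g y)) x = -(pd j g x) := by
  simp [pd, fderiv_neg]

lemma pd4_zfn (p : Fin 4) (x : Fin 3 → ℝ) : pd4 (fun _ => (0:ℝ)) p x = 0 := by
  by_cases h : p = 0
  · simp [pd4, h]
  · simp [pd4, h, pd]

lemma fderiv_smooth {f : (Fin 3 → ℝ) → ℝ} (hf : ContDiff ℝ (⊤ : ℕ∞) f) :
    ContDiff ℝ (⊤ : ℕ∞) (fderiv ℝ f) :=
  hf.fderiv_right (m := (⊤ : ℕ∞)) (WithTop.coe_le_coe.mpr (by simp))

lemma pd_contDiff {f : (Fin 3 → ℝ) → ℝ} (hf : ContDiff ℝ (⊤ : ℕ∞) f) (i : Fin 3) :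
    ContDiff ℝ (⊤ : ℕ∞) (pd i f) :=
  (fderiv_smooth hf).clm_apply contDiff_const

lemma pd_symm {f : (Fin 3 → ℝ) → ℝ} (hf : ContDiff ℝ (⊤ : ℕ∞) f) (i j : Fin 3)
    (x : Fin 3 → ℝ) : pd i (pd j f) x = pd j (pd i f) x := by
  have hd : DifferentiableAt ℝ (fderiv ℝ f) x :=
    ((fderiv_smooth hf).differentiable (by simp)).differentiableAt
  have hsym : IsSymmSndFDerivAt ℝ f x :=
    hf.contDiffAt.isSymmSndFDerivAt (by rw [minSmoothness_of_isRCLikeNormedField]; exact WithTop.coe_le_coe.mpr (le_top : (2 : ℕ∞) ≤ ⊤))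
  have key : ∀ v w : Fin 3 → ℝ,
      fderiv ℝ (fun y => fderiv ℝ f y w) x v = fderiv ℝ (fderiv ℝ f) x v w := by
    intro v w
    rw [fderiv_clm_apply hd (differentiableAt_const _)]
    simp
  show fderiv ℝ (fun y => fderiv ℝ f y (Pi.single j 1)) x (Pi.single i 1)
      = fderiv ℝ (fun y => fderiv ℝ f y (Pi.single i 1)) x (Pi.single j 1)
  rw [key, key, hsym.eq]

lemma pd_exp_mul {f : (Fin 3 → ℝ) → ℝ} (hf : ContDiff ℝ (⊤ : ℕ∞) f) (i j : Fin 3)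
    (x : Fin 3 → ℝ) :
    pd j (fun y => Real.exp (-f y) * pd i f y) x
      = Real.exp (-f x) * (pd j (pd i f) x - pd j f x * pd i f x) := by
  have hfx : HasFDerivAt f (fderiv ℝ f x) x :=
    ((hf.differentiable (by simp)).differentiableAt).hasFDerivAt
  have hexp : HasFDerivAt (fun y => Real.exp (-f y))
      (Real.exp (-f x) • (-(fderiv ℝ f x))) x := (hfx.neg).exp
  have hpi : HasFDerivAt (pd i f) (fderiv ℝ (pd i f) x) x :=
    (((pd_contDiff hf i).differentiable (by simp)).differentiableAt).hasFDerivAt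
  have h := (hexp.mul hpi).fderiv
  show fderiv ℝ (fun y => Real.exp (-f y) * pd i f y) x (Pi.single j 1) = _
  rw [show (fun y => Real.exp (-f y) * pd i f y) = (fun y => Real.exp (-f y)) * pd i f from rfl, h]
  show Real.exp (-f x) * (fderiv ℝ (pd i f) x (Pi.single j 1)) +
      pd i f x * ((Real.exp (-f x) • (-(fderiv ℝ f x))) (Pi.single j 1)) = _
  simp [pd]
  ring

/-- for the quasi-conformal coframe, (i) `⁽²⁾B_{ij} = −e^{−2f}φ_{ij}` for all
spatial `i,j` and `⁽²⁾B_{0a} = ⁽²⁾B_{a0} = 0`; (ii) `⁽³⁾B_{ab} = 0` identically. -/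
theorem B2_B3_explicit (f : (Fin 3 → ℝ) → ℝ) (hf : ContDiff ℝ (⊤ : ℕ∞) f)
    (x : Fin 3 → ℝ) :
    (∀ i j : Fin 3, B2 f i.succ j.succ x = -Real.exp (-2 * f x) * phiM f i j x) ∧
    (∀ a : Fin 4, B2 f 0 a x = 0 ∧ B2 f a 0 x = 0) ∧
    (∀ a b : Fin 4, B3 f a b x = 0) := by
  refine ⟨?_, ?_, ?_⟩
  · intro i j
    have hsymm := pd_symm hf
    have key := pd_exp_mul hf
    have e2 : Real.exp (-2 * f x) = Real.exp (-f x) * Real.exp (-f x) := by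
      rw [show (-2 : ℝ) * f x = -f x + -f x by ring, Real.exp_add]
    fin_cases i
    · show B2 f 1 j.succ x = -Real.exp (-2 * f x) * phiM f 0 j x
      have h0 : Cob f 0 0 1 = fun y => Real.exp (-f y) * pd 0 f y := by
        funext y;simp [Cob, pd4_zero', pd4_one, pd4_two, pd4_three]
      have hd : Cob f 1 1 1 = fun _ => (0:ℝ) := by
        funext y;simp [Cob, pd4_zero', pd4_one, pd4_two, pd4_three]
      have hn0 : Cob f 2 2 1 = fun y => -(Real.exp (-f y) * pd 0 f y) := by
        funext y;simp [Cob, pd4_zero', pd4_one, pd4_two, pd4_three]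
      have hn1 : Cob f 3 3 1 = fun y => -(Real.exp (-f y) * pd 0 f y) := by
        funext y;simp [Cob, pd4_zero', pd4_one, pd4_two, pd4_three]
      simp only [B2, Bob, Fin.sum_univ_four, h0, hd, hn0, hn1, pd4_succ, pd_zero, pd_neg, key, phiM, e2]
      rw [hsymm 0 j x]
      ring
    · show B2 f 2 j.succ x = -Real.exp (-2 * f x) * phiM f 1 j x
      have h0 : Cob f 0 0 2 = fun y => Real.exp (-f y) * pd 1 f y := by
        funext y;simp [Cob, pd4_zero', pd4_one, pd4_two, pd4_three]
      have hd : Cob f 2 2 2 = fun _ => (0:ℝ) := by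
        funext y;simp [Cob, pd4_zero', pd4_one, pd4_two, pd4_three]
      have hn0 : Cob f 1 1 2 = fun y => -(Real.exp (-f y) * pd 1 f y) := by
        funext y;simp [Cob, pd4_zero', pd4_one, pd4_two, pd4_three]
      have hn1 : Cob f 3 3 2 = fun y => -(Real.exp (-f y) * pd 1 f y) := by
        funext y;simp [Cob, pd4_zero', pd4_one, pd4_two, pd4_three]
      simp only [B2, Bob, Fin.sum_univ_four, h0, hd, hn0, hn1, pd4_succ, pd_zero, pd_neg, key, phiM, e2]
      rw [hsymm 1 j x]
      ring
    · show B2 f 3 j.succ x = -Real.exp (-2 * f x) * phiM f 2 j x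
      have h0 : Cob f 0 0 3 = fun y => Real.exp (-f y) * pd 2 f y := by
        funext y;simp [Cob, pd4_zero', pd4_one, pd4_two, pd4_three]
      have hd : Cob f 3 3 3 = fun _ => (0:ℝ) := by
        funext y;simp [Cob, pd4_zero', pd4_one, pd4_two, pd4_three]
      have hn0 : Cob f 1 1 3 = fun y => -(Real.exp (-f y) * pd 2 f y) := by
        funext y;simp [Cob, pd4_zero', pd4_one, pd4_two, pd4_three]
      have hn1 : Cob f 2 2 3 = fun y => -(Real.exp (-f y) * pd 2 f y) := by
        funext y;simp [Cob, pd4_zero', pd4_one, pd4_two, pd4_three]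
      simp only [B2, Bob, Fin.sum_univ_four, h0, hd, hn0, hn1, pd4_succ, pd_zero, pd_neg, key, phiM, e2]
      rw [hsymm 2 j x]
      ring
  · intro a
    constructor
    · have hZ : ∀ m : Fin 4, Cob f m m 0 = fun _ => (0:ℝ) := by
        intro m; funext y; fin_cases m <;> simp [Cob, pd4_zero']
      simp [B2, Bob, Fin.sum_univ_four, hZ, pd4_zfn]
    · simp [B2, Bob, pd4_zero', Fin.sum_univ_four]
  · intro a b
    have hsymm := pd_symm hf
    have key := pd_exp_mul hf
    fin_cases a <;> fin_cases b
    · show B3 f 0 0 x = 0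
      have hz1 : Cob f 1 0 0 = fun _ => (0:ℝ) := by
        funext y;simp [Cob, pd4_zero', pd4_one, pd4_two, pd4_three]
      have hz2 : Cob f 2 0 0 = fun _ => (0:ℝ) := by
        funext y;simp [Cob, pd4_zero', pd4_one, pd4_two, pd4_three]
      have hz3 : Cob f 3 0 0 = fun _ => (0:ℝ) := by
        funext y;simp [Cob, pd4_zero', pd4_one, pd4_two, pd4_three]
      simp [B3, Bob, Fin.sum_univ_four, hz1, hz2, hz3, pd4_zero', pd4_one, pd4_two, pd4_three, pd_zero]
    · show B3 f 0 1 x = 0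
      have hz1 : Cob f 1 0 1 = fun _ => (0:ℝ) := by
        funext y;simp [Cob, pd4_zero', pd4_one, pd4_two, pd4_three]
      have hz2 : Cob f 2 0 1 = fun _ => (0:ℝ) := by
        funext y;simp [Cob, pd4_zero', pd4_one, pd4_two, pd4_three]
      have hz3 : Cob f 3 0 1 = fun _ => (0:ℝ) := by
        funext y;simp [Cob, pd4_zero', pd4_one, pd4_two, pd4_three]
      simp [B3, Bob, Fin.sum_univ_four, hz1, hz2, hz3, pd4_zero', pd4_one, pd4_two, pd4_three, pd_zero]
    · show B3 f 0 2 x = 0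
      have hz1 : Cob f 1 0 2 = fun _ => (0:ℝ) := by
        funext y;simp [Cob, pd4_zero', pd4_one, pd4_two, pd4_three]
      have hz2 : Cob f 2 0 2 = fun _ => (0:ℝ) := by
        funext y;simp [Cob, pd4_zero', pd4_one, pd4_two, pd4_three]
      have hz3 : Cob f 3 0 2 = fun _ => (0:ℝ) := by
        funext y;simp [Cob, pd4_zero', pd4_one, pd4_two, pd4_three]
      simp [B3, Bob, Fin.sum_univ_four, hz1, hz2, hz3, pd4_zero', pd4_one, pd4_two, pd4_three, pd_zero]
    · show B3 f 0 3 x = 0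
      have hz1 : Cob f 1 0 3 = fun _ => (0:ℝ) := by
        funext y;simp [Cob, pd4_zero', pd4_one, pd4_two, pd4_three]
      have hz2 : Cob f 2 0 3 = fun _ => (0:ℝ) := by
        funext y;simp [Cob, pd4_zero', pd4_one, pd4_two, pd4_three]
      have hz3 : Cob f 3 0 3 = fun _ => (0:ℝ) := by
        funext y;simp [Cob, pd4_zero', pd4_one, pd4_two, pd4_three]
      simp [B3, Bob, Fin.sum_univ_four, hz1, hz2, hz3, pd4_zero', pd4_one, pd4_two, pd4_three, pd_zero]
    · show B3 f 1 0 x = 0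
      have hz1 : Cob f 1 1 0 = fun _ => (0:ℝ) := by
        funext y;simp [Cob, pd4_zero', pd4_one, pd4_two, pd4_three]
      have hz2 : Cob f 2 1 0 = fun _ => (0:ℝ) := by
        funext y;simp [Cob, pd4_zero', pd4_one, pd4_two, pd4_three]
      have hz3 : Cob f 3 1 0 = fun _ => (0:ℝ) := by
        funext y;simp [Cob, pd4_zero', pd4_one, pd4_two, pd4_three]
      simp [B3, Bob, Fin.sum_univ_four, hz1, hz2, hz3, pd4_zero', pd4_one, pd4_two, pd4_three, pd_zero]
    · show B3 f 1 1 x = 0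
      have hz1 : Cob f 1 1 1 = fun _ => (0:ℝ) := by
        funext y;simp [Cob, pd4_zero', pd4_one, pd4_two, pd4_three]
      have hz2 : Cob f 2 1 1 = fun _ => (0:ℝ) := by
        funext y;simp [Cob, pd4_zero', pd4_one, pd4_two, pd4_three]
      have hz3 : Cob f 3 1 1 = fun _ => (0:ℝ) := by
        funext y;simp [Cob, pd4_zero', pd4_one, pd4_two, pd4_three]
      simp [B3, Bob, Fin.sum_univ_four, hz1, hz2, hz3, pd4_zero', pd4_one, pd4_two, pd4_three, pd_zero]
    · show B3 f 1 2 x = 0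
      have ha : Cob f 1 1 2 = fun y => -(Real.exp (-f y) * pd 1 f y) := by
        funext y;simp [Cob, pd4_zero', pd4_one, pd4_two, pd4_three]
      have hb : Cob f 2 1 2 = fun y => Real.exp (-f y) * pd 0 f y := by
        funext y;simp [Cob, pd4_zero', pd4_one, pd4_two, pd4_three]
      have hc : Cob f 3 1 2 = fun _ => (0:ℝ) := by
        funext y;simp [Cob, pd4_zero', pd4_one, pd4_two, pd4_three]
      simp only [B3, Bob, Fin.sum_univ_four, ha, hb, hc, pd4_zero', pd4_one, pd4_two, pd4_three, pd_zero, pd_neg, key, Pi.zero_apply, mul_zero, add_zero, zero_add]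
      rw [hsymm 0 1 x]
      ring
    · show B3 f 1 3 x = 0
      have ha : Cob f 1 1 3 = fun y => -(Real.exp (-f y) * pd 2 f y) := by
        funext y;simp [Cob, pd4_zero', pd4_one, pd4_two, pd4_three]
      have hb : Cob f 3 1 3 = fun y => Real.exp (-f y) * pd 0 f y := by
        funext y;simp [Cob, pd4_zero', pd4_one, pd4_two, pd4_three]
      have hc : Cob f 2 1 3 = fun _ => (0:ℝ) := by
        funext y;simp [Cob, pd4_zero', pd4_one, pd4_two, pd4_three]
      simp only [B3, Bob, Fin.sum_univ_four, ha, hb, hc, pd4_zero', pd4_one, pd4_two, pd4_three, pd_zero, pd_neg, key, Pi.zero_apply, mul_zero, add_zero, zero_add]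
      rw [hsymm 0 2 x]
      ring
    · show B3 f 2 0 x = 0
      have hz1 : Cob f 1 2 0 = fun _ => (0:ℝ) := by
        funext y;simp [Cob, pd4_zero', pd4_one, pd4_two, pd4_three]
      have hz2 : Cob f 2 2 0 = fun _ => (0:ℝ) := by
        funext y;simp [Cob, pd4_zero', pd4_one, pd4_two, pd4_three]
      have hz3 : Cob f 3 2 0 = fun _ => (0:ℝ) := by
        funext y;simp [Cob, pd4_zero', pd4_one, pd4_two, pd4_three]
      simp [B3, Bob, Fin.sum_univ_four, hz1, hz2, hz3, pd4_zero', pd4_one, pd4_two, pd4_three, pd_zero]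
    · show B3 f 2 1 x = 0
      have ha : Cob f 2 2 1 = fun y => -(Real.exp (-f y) * pd 0 f y) := by
        funext y;simp [Cob, pd4_zero', pd4_one, pd4_two, pd4_three]
      have hb : Cob f 1 2 1 = fun y => Real.exp (-f y) * pd 1 f y := by
        funext y;simp [Cob, pd4_zero', pd4_one, pd4_two, pd4_three]
      have hc : Cob f 3 2 1 = fun _ => (0:ℝ) := by
        funext y;simp [Cob, pd4_zero', pd4_one, pd4_two, pd4_three]
      simp only [B3, Bob, Fin.sum_univ_four, ha, hb, hc, pd4_zero', pd4_one, pd4_two, pd4_three, pd_zero, pd_neg, key, Pi.zero_apply, mul_zero, add_zero, zero_add]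
      rw [hsymm 1 0 x]
      ring
    · show B3 f 2 2 x = 0
      have hz1 : Cob f 1 2 2 = fun _ => (0:ℝ) := by
        funext y;simp [Cob, pd4_zero', pd4_one, pd4_two, pd4_three]
      have hz2 : Cob f 2 2 2 = fun _ => (0:ℝ) := by
        funext y;simp [Cob, pd4_zero', pd4_one, pd4_two, pd4_three]
      have hz3 : Cob f 3 2 2 = fun _ => (0:ℝ) := by
        funext y;simp [Cob, pd4_zero', pd4_one, pd4_two, pd4_three]
      simp [B3, Bob, Fin.sum_univ_four, hz1, hz2, hz3, pd4_zero', pd4_one, pd4_two, pd4_three, pd_zero]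
    · show B3 f 2 3 x = 0
      have ha : Cob f 2 2 3 = fun y => -(Real.exp (-f y) * pd 2 f y) := by
        funext y;simp [Cob, pd4_zero', pd4_one, pd4_two, pd4_three]
      have hb : Cob f 3 2 3 = fun y => Real.exp (-f y) * pd 1 f y := by
        funext y;simp [Cob, pd4_zero', pd4_one, pd4_two, pd4_three]
      have hc : Cob f 1 2 3 = fun _ => (0:ℝ) := by
        funext y;simp [Cob, pd4_zero', pd4_one, pd4_two, pd4_three]
      simp only [B3, Bob, Fin.sum_univ_four, ha, hb, hc, pd4_zero', pd4_one, pd4_two, pd4_three, pd_zero, pd_neg, key, Pi.zero_apply, mul_zero, add_zero, zero_add]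
      rw [hsymm 1 2 x]
      ring
    · show B3 f 3 0 x = 0
      have hz1 : Cob f 1 3 0 = fun _ => (0:ℝ) := by
        funext y;simp [Cob, pd4_zero', pd4_one, pd4_two, pd4_three]
      have hz2 : Cob f 2 3 0 = fun _ => (0:ℝ) := by
        funext y;simp [Cob, pd4_zero', pd4_one, pd4_two, pd4_three]
      have hz3 : Cob f 3 3 0 = fun _ => (0:ℝ) := by
        funext y;simp [Cob, pd4_zero', pd4_one, pd4_two, pd4_three]
      simp [B3, Bob, Fin.sum_univ_four, hz1, hz2, hz3, pd4_zero', pd4_one, pd4_two, pd4_three, pd_zero]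
    · show B3 f 3 1 x = 0
      have ha : Cob f 3 3 1 = fun y => -(Real.exp (-f y) * pd 0 f y) := by
        funext y;simp [Cob, pd4_zero', pd4_one, pd4_two, pd4_three]
      have hb : Cob f 1 3 1 = fun y => Real.exp (-f y) * pd 2 f y := by
        funext y;simp [Cob, pd4_zero', pd4_one, pd4_two, pd4_three]
      have hc : Cob f 2 3 1 = fun _ => (0:ℝ) := by
        funext y;simp [Cob, pd4_zero', pd4_one, pd4_two, pd4_three]
      simp only [B3, Bob, Fin.sum_univ_four, ha, hb, hc, pd4_zero', pd4_one, pd4_two, pd4_three, pd_zero, pd_neg, key, Pi.zero_apply, mul_zero, add_zero, zero_add]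
      rw [hsymm 2 0 x]
      ring
    · show B3 f 3 2 x = 0
      have ha : Cob f 3 3 2 = fun y => -(Real.exp (-f y) * pd 1 f y) := by
        funext y;simp [Cob, pd4_zero', pd4_one, pd4_two, pd4_three]
      have hb : Cob f 2 3 2 = fun y => Real.exp (-f y) * pd 2 f y := by
        funext y;simp [Cob, pd4_zero', pd4_one, pd4_two, pd4_three]
      have hc : Cob f 1 3 2 = fun _ => (0:ℝ) := by
        funext y;simp [Cob, pd4_zero', pd4_one, pd4_two, pd4_three]
      simp only [B3, Bob, Fin.sum_univ_four, ha, hb, hc, pd4_zero', pd4_one, pd4_two, pd4_three, pd_zero, pd_neg, key, Pi.zero_apply, mul_zero, add_zero, zero_add]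
      rw [hsymm 2 1 x]
      ring
    · show B3 f 3 3 x = 0
      have hz1 : Cob f 1 3 3 = fun _ => (0:ℝ) := by
        funext y;simp [Cob, pd4_zero', pd4_one, pd4_two, pd4_three]
      have hz2 : Cob f 2 3 3 = fun _ => (0:ℝ) := by
        funext y;simp [Cob, pd4_zero', pd4_one, pd4_two, pd4_three]
      have hz3 : Cob f 3 3 3 = fun _ => (0:ℝ) := by
        funext y;simp [Cob, pd4_zero', pd4_one, pd4_two, pd4_three]
      simp [B3, Bob, Fin.sum_univ_four, hz1, hz2, hz3, pd4_zero', pd4_one, pd4_two, pd4_three, pd_zero]
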